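/- (Key step of Theorem 2.) Let P, I, C be n×n max-plus matrices and λ ∈ ℝ. Fix d ∈ ℕ, and let T_P, T_I, T_C be the d×d matrices defined by (T_P)_{i,i+1}=0, (T_P)_{d,1}=dλ, (T_I)_{i+1,i}=0, (T_I)_{1,d}=-dλ, T_C = identity (all other entries -∞). If for some i and h the diagonal entry ((λP ⊕ λ⁻¹I ⊕ C)^h)_{ii} > 0 (max-plus power, λP means adding λ to all entries of P, λ⁻¹I subtracting λ), then ((((T_P ⊗ᵗ P) ⊕ (T_I ⊗ᵗ I) ⊕ (T_C ⊗ᵗ C))^h)^d)_{ii} > 0. -/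

import Mathlib

/-- Max-plus matrix product over `ℝ̄`. -/
noncomputable def mpMulE {m : Type*} (A : Matrix m m EReal) (B : Matrix m m EReal) :
    Matrix m m EReal :=
  fun i j => ⨆ k, A i k + B k j

/-- Max-plus identity matrix. -/
noncomputable def mpIdE (m : Type*) [DecidableEq m] : Matrix m m EReal :=
  fun i j => if i = j then 0 else ⊥

/-- Max-plus matrix power. -/
noncomputable def mpPowE {m : Type*} [DecidableEq m] (A : Matrix m m EReal) :
    ℕ → Matrix m m EReal
  | 0 => mpIdE m
  | r + 1 => mpMulE A (mpPowE A r)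

/-- The cyclic shift matrix `T_P(λ)` (0-based indices), over `ℝ̄`. -/
noncomputable def TPE (d : ℕ) (lam : ℝ) : Matrix (Fin d) (Fin d) EReal :=
  fun i j => if (i : ℕ) + 1 = (j : ℕ) then 0
    else if (i : ℕ) = d - 1 ∧ (j : ℕ) = 0 then (((d : ℝ) * lam : ℝ) : EReal) else ⊥

/-- The cyclic shift matrix `T_I(λ)` (0-based indices), over `ℝ̄`. -/
noncomputable def TIE (d : ℕ) (lam : ℝ) : Matrix (Fin d) (Fin d) EReal :=
  fun i j => if (j : ℕ) + 1 = (i : ℕ) then 0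
    else if (i : ℕ) = 0 ∧ (j : ℕ) = d - 1 then ((-((d : ℝ) * lam) : ℝ) : EReal) else ⊥

open Finset

/-- walk weight -/
noncomputable def wWE {m : Type*} (A : Matrix m m EReal) (f : ℕ → m) (h : ℕ) : EReal :=
  ∑ t ∈ Finset.range h, A (f t) (f (t+1))

lemma wWE_le_mpPowE {m : Type*} [DecidableEq m] (A : Matrix m m EReal) :
    ∀ (h : ℕ) (f : ℕ → m), wWE A f h ≤ mpPowE A h (f 0) (f h) := by
  intro h
  induction h with
  | zero => intro f; simp [wWE, mpPowE, mpIdE]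
  | succ r ih =>
    intro f
    have h1 : wWE A f (r+1) = A (f 0) (f 1) + wWE A (fun t => f (t+1)) r := by
      rw [wWE, Finset.sum_range_succ' (fun t => A (f t) (f (t+1))) r, add_comm]
      rfl
    have h2 := ih (fun t => f (t+1))
    have h2 : wWE A (fun t => f (t+1)) r ≤ mpPowE A r (f 1) (f (r+1)) := h2
    calc wWE A f (r+1) = A (f 0) (f 1) + wWE A (fun t => f (t+1)) r := h1
      _ ≤ A (f 0) (f 1) + mpPowE A r (f 1) (f (r+1)) := add_le_add_right h2 _
      _ ≤ ⨆ k, A (f 0) k + mpPowE A r k (f (r+1)) := le_iSup (fun k => A (f 0) k + mpPowE A r k (f (r+1))) (f 1)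
      _ = mpPowE A (r+1) (f 0) (f (r+1)) := rfl

lemma mpPowE_extract {m : Type*} [DecidableEq m] [Fintype m] [Nonempty m] (A : Matrix m m EReal) :
    ∀ (h : ℕ) (i j : m), mpPowE A h i j = ⊥ ∨
      ∃ f : ℕ → m, f 0 = i ∧ f h = j ∧ wWE A f h = mpPowE A h i j := by
  intro h
  induction h with
  | zero =>
    intro i j
    by_cases hij : i = j
    · subst hij
      exact Or.inr ⟨fun _ => i, rfl, rfl, by simp [wWE, mpPowE, mpIdE]⟩
    · exact Or.inl (by simp [mpPowE, mpIdE, hij])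
  | succ r ih =>
    intro i j
    obtain ⟨k, hk⟩ := exists_eq_ciSup_of_finite (f := fun k => A i k + mpPowE A r k j)
    have hval : mpPowE A (r+1) i j = A i k + mpPowE A r k j := hk.symm
    by_cases hb : mpPowE A (r+1) i j = ⊥
    · exact Or.inl hb
    right
    have h2 : mpPowE A r k j ≠ ⊥ := by
      intro h3; rw [hval, h3] at hb; simp at hb
    rcases ih k j with h4 | ⟨g, hg0, hgr, hgw⟩
    · exact absurd h4 h2
    refine ⟨fun t => if t = 0 then i else g (t-1), by simp, by simp [hgr], ?_⟩
    have hfw : wWE A (fun t => if t = 0 then i else g (t-1)) (r+1)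
        = wWE A g r + A i (g 0) := by
      rw [wWE, Finset.sum_range_succ']
      simp [wWE]
    rw [hfw, hg0, hgw, hval, add_comm]

lemma ereal_shift (a c : ℝ) (x : EReal) (h : (a : EReal) + x = (c : EReal)) :
    x = ((c - a : ℝ) : EReal) := by
  induction x using EReal.rec with
  | bot => simp at h
  | coe r =>
    rw [← EReal.coe_add] at h
    have : a + r = c := by exact_mod_cast h
    have : r = c - a := by linarith
    exact_mod_cast congrArg (fun y : ℝ => (y : EReal)) this
  | top =>
    rw [EReal.add_top_of_ne_bot (by simp)] at h
    exact absurd h.symm (EReal.coe_ne_top c)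

lemma coe_sum_ereal (s : Finset ℕ) (f : ℕ → ℝ) :
    ((∑ x ∈ s, f x : ℝ) : EReal) = ∑ x ∈ s, (f x : EReal) :=
  map_sum (⟨⟨(fun x : ℝ => (x : EReal)), EReal.coe_zero⟩, EReal.coe_add⟩ : ℝ →+ EReal) f s

lemma int_up (d : ℤ) (hd : 0 < d) (z : ℤ) (h : z % d ≠ d - 1) :
    (z+1)/d = z/d ∧ (z+1)%d = z%d + 1 := by
  have h0 := Int.mul_ediv_add_emod z d
  have h1 : 0 ≤ z % d := Int.emod_nonneg z hd.ne'
  have h2 : z % d < d := Int.emod_lt_of_pos z hd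
  have hz : z + 1 = (z % d + 1) + d * (z / d) := by linarith
  constructor
  · rw [hz, Int.add_mul_ediv_left _ _ hd.ne', Int.ediv_eq_zero_of_lt (by linarith) (by omega), zero_add]
  · rw [hz, Int.add_mul_emod_self_left, Int.emod_eq_of_lt (by linarith) (by omega)]

lemma int_up_wrap (d : ℤ) (hd : 0 < d) (z : ℤ) (h : z % d = d - 1) :
    (z+1)/d = z/d + 1 ∧ (z+1)%d = 0 := by
  have h0 := Int.mul_ediv_add_emod z d
  have hz : z + 1 = d * (z / d + 1) := by rw [mul_add]; omega
  constructor
  · rw [hz, Int.mul_ediv_cancel_left _ hd.ne']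
  · rw [hz, Int.mul_emod_right]

lemma int_down (d : ℤ) (hd : 0 < d) (z : ℤ) (h : z % d ≠ 0) :
    (z-1)/d = z/d ∧ (z-1)%d = z%d - 1 := by
  have h0 := Int.mul_ediv_add_emod z d
  have h1 : 0 ≤ z % d := Int.emod_nonneg z hd.ne'
  have h2 : z % d < d := Int.emod_lt_of_pos z hd
  have hz : z - 1 = (z % d - 1) + d * (z / d) := by linarith
  constructor
  · rw [hz, Int.add_mul_ediv_left _ _ hd.ne', Int.ediv_eq_zero_of_lt (by omega) (by omega), zero_add]
  · rw [hz, Int.add_mul_emod_self_left, Int.emod_eq_of_lt (by omega) (by omega)]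

lemma int_down_wrap (d : ℤ) (hd : 0 < d) (z : ℤ) (h : z % d = 0) :
    (z-1)/d = z/d - 1 ∧ (z-1)%d = d - 1 := by
  have h0 := Int.mul_ediv_add_emod z d
  have hz : z - 1 = (d - 1) + d * (z / d - 1) := by rw [mul_sub]; omega
  constructor
  · rw [hz, Int.add_mul_ediv_left _ _ hd.ne', Int.ediv_eq_zero_of_lt (by omega) (by omega), zero_add]
  · rw [hz, Int.add_mul_emod_self_left, Int.emod_eq_of_lt (by omega) (by omega)]

lemma sum_mod_mul {β : Type*} [AddCommMonoid β] (g : ℕ → β) (h : ℕ) :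
    ∀ k : ℕ, ∑ s ∈ range (k*h), g (s % h) = k • ∑ t ∈ range h, g t := by
  intro k
  induction k with
  | zero => simp
  | succ k ih =>
    rw [succ_nsmul, ← ih, Nat.succ_mul, Finset.sum_range_add]
    congr 1
    refine Finset.sum_congr rfl fun t ht => ?_
    rw [Nat.add_comm (k*h) t, Nat.add_mul_mod_self_right, Nat.mod_eq_of_lt (Finset.mem_range.mp ht)]

lemma sum_flat {β : Type*} [AddCommMonoid β] (g : ℕ → β) (h : ℕ) :
    ∀ k : ℕ, ∑ s ∈ range (k*h), g s = ∑ r ∈ range k, ∑ t ∈ range h, g (r*h+t) := by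
  intro k
  induction k with
  | zero => simp
  | succ k ih =>
    rw [Nat.succ_mul, Finset.sum_range_add, ih, Finset.sum_range_succ]

/-- Key step of Theorem 2: if `((λP ⊕ λ⁻¹I ⊕ C)^h)ᵢᵢ > 0`, then the corresponding
diagonal entry (in the first block) of `(((T_P ⊗ᵗ P) ⊕ (T_I ⊗ᵗ I) ⊕ (T_C ⊗ᵗ C))^h)^d`
is also positive. -/
theorem stmt15 {n : ℕ} (P I C : Matrix (Fin n) (Fin n) EReal)
    (hP : ∀ i j, P i j ≠ ⊤) (hI : ∀ i j, I i j ≠ ⊤) (hC : ∀ i j, C i j ≠ ⊤)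
    (lam : ℝ) (d : ℕ) (hd : 0 < d) (h : ℕ) (i : Fin n)
    (hpos : 0 < mpPowE
      (fun i j => max ((lam : EReal) + P i j) (max ((-lam : ℝ) + I i j) (C i j))) h i i) :
    0 < mpPowE
        (mpPowE (fun p q : Fin d × Fin n =>
          max (TPE d lam p.1 q.1 + P p.2 q.2)
            (max (TIE d lam p.1 q.1 + I p.2 q.2) (mpIdE (Fin d) p.1 q.1 + C p.2 q.2))) h)
        d (⟨0, hd⟩, i) (⟨0, hd⟩, i) := by
  classical
  rcases Nat.eq_zero_or_pos h with hh0 | hh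
  · subst hh0
    simp [mpPowE, mpIdE] at hpos
  haveI : Nonempty (Fin n) := ⟨i⟩
  set A : Matrix (Fin n) (Fin n) EReal :=
    fun i j => max ((lam : EReal) + P i j) (max ((-lam : ℝ) + I i j) (C i j)) with hAdef
  set B : Matrix (Fin d × Fin n) (Fin d × Fin n) EReal := fun p q =>
      max (TPE d lam p.1 q.1 + P p.2 q.2)
        (max (TIE d lam p.1 q.1 + I p.2 q.2) (mpIdE (Fin d) p.1 q.1 + C p.2 q.2)) with hBdef
  rcases mpPowE_extract A h i i with hbot | ⟨f, hf0, hfh, hfw⟩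
  · rw [hbot] at hpos; exact absurd hpos (by simp)
  have hAtop : ∀ a b, A a b ≠ ⊤ := by
    intro a b
    simp only [hAdef]
    exact (max_lt (EReal.add_lt_top (EReal.coe_ne_top lam) (hP a b))
      (max_lt (EReal.add_lt_top (EReal.coe_ne_top (-lam)) (hI a b)) (hC a b).lt_top)).ne
  have hbotne : ∀ t, t < h → A (f t) (f (t+1)) ≠ ⊥ := by
    intro t ht hb
    have hsum := (Finset.add_sum_erase (Finset.range h) (fun t => A (f t) (f (t+1)))
      (Finset.mem_range.mpr ht)).symm
    have hbb : mpPowE A h i i = ⊥ := by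
      rw [← hfw, wWE, hsum]
      simp [hb]
    rw [hbb] at hpos
    exact absurd hpos (by simp)
  obtain ⟨vr, hvr⟩ : ∃ vr : ℕ → ℝ, ∀ t, t < h → ((vr t : ℝ) : EReal) = A (f t) (f (t+1)) :=
    ⟨fun t => (A (f t) (f (t+1))).toReal, fun t ht => EReal.coe_toReal (hAtop _ _) (hbotne t ht)⟩
  have hWr : ((∑ t ∈ Finset.range h, vr t : ℝ) : EReal) = mpPowE A h i i := by
    rw [coe_sum_ereal, ← hfw, wWE]
    exact Finset.sum_congr rfl fun t ht => hvr t (Finset.mem_range.mp ht)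
  have hWrpos : 0 < ∑ t ∈ Finset.range h, vr t := by
    have := hpos; rw [← hWr] at this; exact EReal.coe_pos.mp this
  obtain ⟨δ, hδ⟩ : ∃ δ : ℕ → ℤ, ∀ t, t < h →
      (δ t = 1 ∧ A (f t) (f (t+1)) = (lam : EReal) + P (f t) (f (t+1))) ∨
      (δ t = -1 ∧ A (f t) (f (t+1)) = ((-lam : ℝ) : EReal) + I (f t) (f (t+1))) ∨
      (δ t = 0 ∧ A (f t) (f (t+1)) = C (f t) (f (t+1))) := by
    refine ⟨fun t => if A (f t) (f (t+1)) = (lam : EReal) + P (f t) (f (t+1)) then 1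
      else if A (f t) (f (t+1)) = ((-lam : ℝ) : EReal) + I (f t) (f (t+1)) then -1 else 0,
      fun t ht => ?_⟩
    dsimp only
    split_ifs with h1 h2
    · exact Or.inl ⟨rfl, h1⟩
    · exact Or.inr (Or.inl ⟨rfl, h2⟩)
    · refine Or.inr (Or.inr ⟨rfl, ?_⟩)
      have hmax : A (f t) (f (t+1)) = max ((lam : EReal) + P (f t) (f (t+1)))
          (max (((-lam : ℝ) : EReal) + I (f t) (f (t+1))) (C (f t) (f (t+1)))) := by
        simp only [hAdef]
      rcases max_choice ((lam : EReal) + P (f t) (f (t+1)))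
          (max (((-lam : ℝ) : EReal) + I (f t) (f (t+1))) (C (f t) (f (t+1)))) with hc | hc
      · exact absurd (hmax.trans hc) h1
      · rcases max_choice (((-lam : ℝ) : EReal) + I (f t) (f (t+1))) (C (f t) (f (t+1)))
          with hc2 | hc2
        · exact absurd (hmax.trans (hc.trans hc2)) h2
        · exact hmax.trans (hc.trans hc2)
  obtain ⟨φ, hφdef⟩ : ∃ φ : ℕ → ℤ, φ = fun s => ∑ t ∈ Finset.range s, δ (t % h) := ⟨_, rfl⟩
  have hφ0 : φ 0 = 0 := by simp [hφdef]
  have hφs : ∀ s, φ (s+1) = φ s + δ (s % h) := by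
    intro s; simp only [hφdef]; exact Finset.sum_range_succ _ s
  have hφh : φ h = ∑ t ∈ Finset.range h, δ t := by
    simp only [hφdef]
    exact Finset.sum_congr rfl fun t ht => by rw [Nat.mod_eq_of_lt (Finset.mem_range.mp ht)]
  have hφmul : ∀ k : ℕ, φ (k*h) = (k : ℤ) * φ h := by
    intro k
    simp only [hφdef]
    rw [sum_mod_mul δ h k, nsmul_eq_mul, ← hφh]
    simp only [hφdef]
  have hdZ : (0 : ℤ) < (d : ℤ) := by exact_mod_cast hd
  obtain ⟨ph, hph⟩ : ∃ ph : ℕ → Fin d, ∀ s, (ph s : ℕ) = (φ s % (d : ℤ)).toNat := by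
    refine ⟨fun s => ⟨(φ s % (d : ℤ)).toNat, ?_⟩, fun s => rfl⟩
    have h1 := Int.emod_nonneg (φ s) hdZ.ne'
    have h2 := Int.emod_lt_of_pos (φ s) hdZ
    omega
  obtain ⟨F, hF⟩ : ∃ F : ℕ → Fin d × Fin n, F = fun s => (ph s, f (s % h)) := ⟨_, rfl⟩
  obtain ⟨w, hwdef⟩ : ∃ w : ℕ → ℝ, w = fun s =>
      (d : ℝ) * lam * ((φ (s+1) / (d : ℤ) - φ s / (d : ℤ) : ℤ) : ℝ) + vr (s % h)
        - lam * ((δ (s % h) : ℤ) : ℝ) := ⟨_, rfl⟩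
  have hstep : ∀ s : ℕ, ((w s : ℝ) : EReal) ≤ B (F s) (F (s+1)) := by
    intro s
    have ht : s % h < h := Nat.mod_lt _ hh
    have hnext : f ((s+1) % h) = f (s % h + 1) := by
      rcases Nat.lt_or_ge (s % h + 1) h with hlt | hge
      · rw [← Nat.mod_add_mod, Nat.mod_eq_of_lt hlt]
      · have he : s % h + 1 = h := by omega
        rw [← Nat.mod_add_mod, he, Nat.mod_self, hf0, hfh]
    have hBval : B (F s) (F (s+1)) =
        max (TPE d lam (ph s) (ph (s+1)) + P (f (s % h)) (f (s % h + 1)))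
          (max (TIE d lam (ph s) (ph (s+1)) + I (f (s % h)) (f (s % h + 1)))
            (mpIdE (Fin d) (ph s) (ph (s+1)) + C (f (s % h)) (f (s % h + 1)))) := by
      simp only [hF, hBdef]
      rw [hnext]
    have hq1 := Int.emod_nonneg (φ s) hdZ.ne'
    have hq2 := Int.emod_lt_of_pos (φ s) hdZ
    rcases hδ (s % h) ht with ⟨hd1, hv⟩ | ⟨hd1, hv⟩ | ⟨hd1, hv⟩
    · have hPe : P (f (s % h)) (f (s % h + 1)) = ((vr (s % h) - lam : ℝ) : EReal) :=
        ereal_shift lam (vr (s % h)) _ (by rw [← hv, hvr _ ht])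
      have hφ1 : φ (s+1) = φ s + 1 := by rw [hφs, hd1]
      by_cases hwrap : φ s % (d : ℤ) = (d : ℤ) - 1
      · obtain ⟨hqd, hrd⟩ := int_up_wrap (d : ℤ) hdZ (φ s) hwrap
        rw [← hφ1] at hqd hrd
        have hps : (ph s : ℕ) = d - 1 := by rw [hph, hwrap]; omega
        have hps1 : (ph (s+1) : ℕ) = 0 := by rw [hph, hrd]; rfl
        have hT : TPE d lam (ph s) (ph (s+1)) = (((d : ℝ) * lam : ℝ) : EReal) := by
          rw [TPE, if_neg (by rw [hps, hps1]; omega), if_pos ⟨hps, hps1⟩]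
        have hws : w s = (d : ℝ) * lam + (vr (s % h) - lam) := by
          simp only [hwdef]
          rw [hqd, hd1]; push_cast; ring
        rw [hBval, hT, hPe, hws, EReal.coe_add]
        exact le_max_left _ _
      · obtain ⟨hqd, hrd⟩ := int_up (d : ℤ) hdZ (φ s) hwrap
        rw [← hφ1] at hqd hrd
        have hT : TPE d lam (ph s) (ph (s+1)) = 0 := by
          rw [TPE, if_pos (by rw [hph, hph, hrd]; omega)]
        have hws : w s = vr (s % h) - lam := by
          simp only [hwdef]
          rw [hqd, hd1]; push_cast; ring
        rw [hBval, hT, hPe, hws, zero_add]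
        exact le_max_left _ _
    · have hIe : I (f (s % h)) (f (s % h + 1)) = ((vr (s % h) - (-lam) : ℝ) : EReal) :=
        ereal_shift (-lam) (vr (s % h)) _ (by rw [← hv, hvr _ ht])
      have hφ1 : φ (s+1) = φ s - 1 := by rw [hφs, hd1]; ring
      by_cases hwrap : φ s % (d : ℤ) = 0
      · obtain ⟨hqd, hrd⟩ := int_down_wrap (d : ℤ) hdZ (φ s) hwrap
        rw [← hφ1] at hqd hrd
        have hps : (ph s : ℕ) = 0 := by rw [hph, hwrap]; rfl
        have hps1 : (ph (s+1) : ℕ) = d - 1 := by rw [hph, hrd]; omega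
        have hT : TIE d lam (ph s) (ph (s+1)) = ((-((d : ℝ) * lam) : ℝ) : EReal) := by
          rw [TIE, if_neg (by rw [hps, hps1]; omega), if_pos ⟨hps, hps1⟩]
        have hws : w s = -((d : ℝ) * lam) + (vr (s % h) - (-lam)) := by
          simp only [hwdef]
          rw [hqd, hd1]; push_cast; ring
        rw [hBval, hT, hIe, hws, EReal.coe_add]
        exact le_trans (le_max_left _ _) (le_max_right _ _)
      · obtain ⟨hqd, hrd⟩ := int_down (d : ℤ) hdZ (φ s) hwrap
        rw [← hφ1] at hqd hrd
        have hT : TIE d lam (ph s) (ph (s+1)) = 0 := by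
          rw [TIE, if_pos (by rw [hph, hph, hrd]; omega)]
        have hws : w s = vr (s % h) - (-lam) := by
          simp only [hwdef]
          rw [hqd, hd1]; push_cast; ring
        rw [hBval, hT, hIe, hws, zero_add]
        exact le_trans (le_max_left _ _) (le_max_right _ _)
    · have hCe : C (f (s % h)) (f (s % h + 1)) = ((vr (s % h) : ℝ) : EReal) := by
        rw [← hv]; exact (hvr _ ht).symm
      have hφ1 : φ (s+1) = φ s := by rw [hφs, hd1]; ring
      have hpheq : ph (s+1) = ph s := Fin.ext (by rw [hph, hph, hφ1])
      have hT : mpIdE (Fin d) (ph s) (ph (s+1)) = 0 := by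
        rw [hpheq]; simp [mpIdE]
      have hws : w s = vr (s % h) := by
        simp only [hwdef]
        rw [hφ1, hd1]; push_cast; ring
      rw [hBval, hT, hCe, hws, zero_add]
      exact le_trans (le_max_right _ _) (le_max_right _ _)
  have hchunk : ∀ r : ℕ, ((∑ t ∈ Finset.range h, w (r*h + t) : ℝ) : EReal)
      ≤ mpPowE B h (F (r*h)) (F (r*h + h)) := by
    intro r
    rw [coe_sum_ereal]
    calc ∑ t ∈ Finset.range h, ((w (r*h+t) : ℝ) : EReal)
        ≤ ∑ t ∈ Finset.range h, B (F (r*h+t)) (F (r*h+t+1)) :=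
          Finset.sum_le_sum fun t _ => hstep _
      _ = wWE B (fun t => F (r*h+t)) h := rfl
      _ ≤ mpPowE B h (F (r*h)) (F (r*h+h)) := wWE_le_mpPowE B h _
  have hg0 : F 0 = (⟨0, hd⟩, i) := by
    have h1 : ph 0 = ⟨0, hd⟩ := Fin.ext (by rw [hph, hφ0]; rfl)
    have h2 : f (0 % h) = i := by rw [Nat.zero_mod, hf0]
    simp only [hF]; rw [h1, h2]
  have hgd : F (d*h) = (⟨0, hd⟩, i) := by
    have h1 : ph (d*h) = ⟨0, hd⟩ := Fin.ext (by rw [hph, hφmul d, Int.mul_emod_right]; rfl)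
    have h2 : f (d*h % h) = i := by rw [Nat.mul_mod_left, hf0]
    simp only [hF]; rw [h1, h2]
  have hkey : ∑ s ∈ Finset.range (d*h), w s = (d : ℝ) * (∑ t ∈ Finset.range h, vr t) := by
    simp only [hwdef]
    rw [Finset.sum_sub_distrib, Finset.sum_add_distrib, ← Finset.mul_sum, ← Finset.mul_sum,
      ← Int.cast_sum, ← Int.cast_sum, Finset.sum_range_sub (fun s => φ s / (d : ℤ))]
    have e1 : φ (d*h) / (d : ℤ) = φ h := by
      rw [hφmul d, Int.mul_ediv_cancel_left _ hdZ.ne']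
    have e2 : φ 0 / (d : ℤ) = 0 := by rw [hφ0]; simp
    have e3 : ∑ s ∈ Finset.range (d*h), vr (s % h) = d • ∑ t ∈ Finset.range h, vr t :=
      sum_mod_mul vr h d
    have e4 : ∑ s ∈ Finset.range (d*h), δ (s % h) = (d : ℤ) * φ h := by
      have : φ (d*h) = ∑ s ∈ Finset.range (d*h), δ (s % h) := by simp only [hφdef]
      rw [← this, hφmul d]
    rw [e1, e2, e3, e4, nsmul_eq_mul]
    push_cast
    ring
  obtain ⟨g, hg⟩ : ∃ g : ℕ → Fin d × Fin n, ∀ r, g r = F (r*h) := ⟨_, fun _ => rfl⟩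
  calc (0 : EReal)
      < (((d : ℝ) * ∑ t ∈ Finset.range h, vr t : ℝ) : EReal) :=
        EReal.coe_pos.mpr (mul_pos (by exact_mod_cast hd) hWrpos)
    _ = ((∑ s ∈ Finset.range (d*h), w s : ℝ) : EReal) := by rw [hkey]
    _ = ((∑ r ∈ Finset.range d, ∑ t ∈ Finset.range h, w (r*h+t) : ℝ) : EReal) := by
        rw [sum_flat w h d]
    _ = ∑ r ∈ Finset.range d, ((∑ t ∈ Finset.range h, w (r*h+t) : ℝ) : EReal) :=
        coe_sum_ereal _ _
    _ ≤ ∑ r ∈ Finset.range d, mpPowE B h (F (r*h)) (F (r*h+h)) :=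
        Finset.sum_le_sum fun r _ => hchunk r
    _ = wWE (mpPowE B h) g d := by
        rw [wWE]
        exact Finset.sum_congr rfl fun r _ => by rw [hg, hg, add_mul, one_mul]
    _ ≤ mpPowE (mpPowE B h) d (g 0) (g d) := wWE_le_mpPowE _ d g
    _ = mpPowE (mpPowE B h) d (⟨0, hd⟩, i) (⟨0, hd⟩, i) := by
        rw [hg, hg, Nat.zero_mul, hg0, hgd]
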